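/- Define an ℤ[1/3][a₁,a₃]-linear map Tr on the free module with basis {1, s, s², s³, t, st, s²t, s³t} by Tr(1) = 8, Tr(s) = −4a₁, Tr(s²) = 2a₁², Tr(s³) = −a₁³, Tr(t) = (1/3)a₁³ − 4a₃, Tr(st) = −2a₁a₃, Tr(s²t) = −(1/3)a₁⁵ + 9a₁²a₃, Tr(s³t) = (1/3)a₁⁶ − 7a₁³a₃ − 27a₃². Then the element 3·(a₁ + 2s)·(a₃ + (1/3)a₁s² + (1/3)a₁²s + 2t), which when expanded equals 3a₁a₃·1 + (a₁³ + 6a₃)·s + 3a₁²·s² + 2a₁·s³ + 6a₁·t + 12·st, has trace Tr equal to 2·(a₁⁴ − 24a₁a₃) = 2c₄. -/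

import Mathlib

open MvPolynomial

/-- The transfer computation `Tr(3·η_R(a₁a₃)) = 2c₄` for the 2-primary cubic Hopf algebroid.
Here `A = R[a₁,a₃]` (with `3` invertible in `R`), `Γ' = A[s,t]/(r₁,r₂)` is free on the basis
`{1, s, s², s³, t, st, s²t, s³t}`, and `Tr` is the `A`-linear map with
`Tr(1) = 8`, `Tr(s) = −4a₁`, `Tr(s²) = 2a₁²`, `Tr(s³) = −a₁³`, `Tr(t) = (1/3)a₁³ − 4a₃`,
`Tr(st) = −2a₁a₃`, `Tr(s²t) = −(1/3)a₁⁵ + 9a₁²a₃`, `Tr(s³t) = (1/3)a₁⁶ − 7a₁³a₃ − 27a₃²`.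
First conjunct: the expansion of `3·(a₁+2s)·(a₃+(1/3)a₁s²+(1/3)a₁²s+2t)` in the basis;
second conjunct: the corresponding `A`-linear combination of trace values equals
`2·(a₁⁴ − 24a₁a₃) = 2c₄`. -/
theorem stmt5 {R : Type*} [CommRing R] (u3 : R) (h3 : 3 * u3 = 1)
    (a1 a3 : MvPolynomial (Fin 2) R) (ha1 : a1 = X 0) (ha3 : a3 = X 1)
    (s t : MvPolynomial (Fin 2) (MvPolynomial (Fin 2) R)) (hs : s = X 0) (ht : t = X 1) :
    (3 * (C a1 + 2 * s) * (C a3 + C (C u3 * a1) * s ^ 2 + C (C u3 * a1 ^ 2) * s + 2 * t)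
      = C (3 * a1 * a3) * 1 + C (a1 ^ 3 + 6 * a3) * s + C (3 * a1 ^ 2) * s ^ 2
        + C (2 * a1) * s ^ 3 + C (6 * a1) * t + C 12 * (s * t)) ∧
    ((3 * a1 * a3) * 8 + (a1 ^ 3 + 6 * a3) * (-(4 * a1)) + (3 * a1 ^ 2) * (2 * a1 ^ 2)
        + (2 * a1) * (-(a1 ^ 3)) + (6 * a1) * (C u3 * a1 ^ 3 - 4 * a3)
        + 12 * (-(2 * a1 * a3))
      = 2 * (a1 ^ 4 - 24 * a1 * a3)) := by
  have h3' : (3 : MvPolynomial (Fin 2) R) * C u3 = 1 := by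
    have := congrArg (C : R → MvPolynomial (Fin 2) R) h3
    rw [map_mul, map_one] at this
    rw [← this, map_ofNat]
  have h3'' : (3 : MvPolynomial (Fin 2) (MvPolynomial (Fin 2) R)) * C (C u3) = 1 := by
    have := congrArg (C : MvPolynomial (Fin 2) R →
      MvPolynomial (Fin 2) (MvPolynomial (Fin 2) R)) h3'
    rw [map_mul, map_one] at this
    rw [← this, map_ofNat]
  constructor
  · simp only [C_mul, C_add, C_pow, map_ofNat]
    linear_combination (C a1 ^ 3 * s + 3 * C a1 ^ 2 * s ^ 2 + 2 * C a1 * s ^ 3) * h3''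
  · linear_combination 2 * a1 ^ 4 * h3'
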